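/- Wave equation representation formula (formula (e13), bounded case). Let H be a complex Hilbert space, A a bounded selfadjoint nonnegative linear operator on H, and f : ℝ → H an infinitely differentiable function whose support is a compact subset of (0,∞). Then the function u(t) = ∫₀^t S(t−s, A) f(s) ds, t ≥ 0, is the unique twice continuously differentiable H-valued function on [0,∞) satisfying u''(t) + A u(t) = f(t) for all t ≥ 0 and u(0) = u'(0) = 0. -/

import Mathlib

open Set MeasureTheory Real

/-- `S(τ, A)`: the continuous functional calculus of `A` applied to the continuous function
`x ↦ sin(τ√x)/√x` on `[0,∞)`, extended by its limiting value `τ` at `x = 0`. -/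
noncomputable def waveKernel {H : Type*} [NormedAddCommGroup H] [InnerProductSpace ℂ H]
    [CompleteSpace H] (τ : ℝ) (A : H →L[ℂ] H) : H →L[ℂ] H :=
  cfc (fun x : ℝ => if x = 0 then τ else Real.sin (τ * Real.sqrt x) / Real.sqrt x) A

section RealEstimates

lemma abs_sub_le_of_mem_uIcc {a b x : ℝ} (hx : x ∈ uIcc a b) : |x - a| ≤ |b - a| := by
  rcases le_total a b with h | h
  · rw [uIcc_of_le h] at hx
    rw [abs_of_nonneg (by linarith [hx.1]), abs_of_nonneg (by linarith)]
    linarith [hx.2]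
  · rw [uIcc_of_ge h] at hx
    rw [abs_of_nonpos (by linarith [hx.2]), abs_of_nonpos (by linarith)]
    linarith [hx.1]

lemma abs_cos_sub_cos_le' (a b : ℝ) : |Real.cos b - Real.cos a| ≤ |b - a| := by
  have h := Convex.norm_image_sub_le_of_norm_deriv_le (f := Real.cos) (C := 1)
    (fun x _ => Real.differentiable_cos x)
    (fun x _ => by rw [Real.deriv_cos]; simpa using Real.abs_sin_le_one x)
    (convex_univ) (Set.mem_univ a) (Set.mem_univ b)
  simpa [Real.norm_eq_abs] using h

lemma sin_taylor_bound (a b : ℝ) :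
    |Real.sin b - Real.sin a - (b - a) * Real.cos a| ≤ (b - a) ^ 2 := by
  have hd : ∀ x, HasDerivAt (fun t => Real.sin t - t * Real.cos a)
      (Real.cos x - Real.cos a) x := fun x => by
    exact ((Real.hasDerivAt_sin x).sub ((hasDerivAt_id x).mul_const (Real.cos a))).congr_deriv (by ring)
  have h := Convex.norm_image_sub_le_of_norm_deriv_le
    (f := fun t => Real.sin t - t * Real.cos a) (C := |b - a|) (s := uIcc a b)
    (fun x _ => (hd x).differentiableAt)
    (fun x hx => by
      rw [(hd x).deriv, Real.norm_eq_abs]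
      exact (abs_cos_sub_cos_le' a x).trans (abs_sub_le_of_mem_uIcc hx))
    (convex_uIcc a b) left_mem_uIcc right_mem_uIcc
  rw [Real.norm_eq_abs, Real.norm_eq_abs] at h
  calc |Real.sin b - Real.sin a - (b - a) * Real.cos a|
      = |Real.sin b - b * Real.cos a - (Real.sin a - a * Real.cos a)| := by ring_nf
    _ ≤ |b - a| * |b - a| := h
    _ = (b - a) ^ 2 := by rw [← abs_mul, ← sq, abs_sq]

lemma abs_sin_sub_sin_le' (a b : ℝ) : |Real.sin b - Real.sin a| ≤ |b - a| := by
  have h := Convex.norm_image_sub_le_of_norm_deriv_le (f := Real.sin) (C := 1)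
    (fun x _ => Real.differentiable_sin x)
    (fun x _ => by rw [Real.deriv_sin]; simpa using Real.abs_cos_le_one x)
    (convex_univ) (Set.mem_univ a) (Set.mem_univ b)
  simpa [Real.norm_eq_abs] using h

lemma cos_taylor_bound (a b : ℝ) :
    |Real.cos b - Real.cos a + (b - a) * Real.sin a| ≤ (b - a) ^ 2 := by
  have hd : ∀ x, HasDerivAt (fun t => Real.cos t + t * Real.sin a)
      (-Real.sin x + Real.sin a) x := fun x => by
    exact ((Real.hasDerivAt_cos x).add ((hasDerivAt_id x).mul_const (Real.sin a))).congr_deriv (by ring)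
  have h := Convex.norm_image_sub_le_of_norm_deriv_le
    (f := fun t => Real.cos t + t * Real.sin a) (C := |b - a|) (s := uIcc a b)
    (fun x _ => (hd x).differentiableAt)
    (fun x hx => by
      rw [(hd x).deriv, Real.norm_eq_abs]
      have : -Real.sin x + Real.sin a = -(Real.sin x - Real.sin a) := by ring
      rw [this, abs_neg]
      exact (abs_sin_sub_sin_le' a x).trans (abs_sub_le_of_mem_uIcc hx))
    (convex_uIcc a b) left_mem_uIcc right_mem_uIcc
  rw [Real.norm_eq_abs, Real.norm_eq_abs] at h
  calc |Real.cos b - Real.cos a + (b - a) * Real.sin a|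
      = |Real.cos b + b * Real.sin a - (Real.cos a + a * Real.sin a)| := by ring_nf
    _ ≤ |b - a| * |b - a| := h
    _ = (b - a) ^ 2 := by rw [← abs_mul, ← sq, abs_sq]

lemma hasDerivAt_of_le_sq {E : Type*} [NormedAddCommGroup E] [NormedSpace ℝ E]
    {F : ℝ → E} {c : E} {τ K : ℝ} (hK : 0 ≤ K)
    (h : ∀ σ, ‖F σ - F τ - (σ - τ) • c‖ ≤ K * (σ - τ) ^ 2) : HasDerivAt F c τ := by
  rw [hasDerivAt_iff_isLittleO, Asymptotics.isLittleO_iff]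
  intro ε hε
  have hball : Metric.closedBall τ (ε / (K + 1)) ∈ nhds τ :=
    Metric.closedBall_mem_nhds τ (by positivity)
  filter_upwards [hball] with σ hσ
  have hστ : |σ - τ| ≤ ε / (K + 1) := by
    simpa [Real.dist_eq] using hσ
  have h2 : K * |σ - τ| ≤ ε := by
    have h3 : K * |σ - τ| ≤ K * (ε / (K + 1)) :=
      mul_le_mul_of_nonneg_left hστ hK
    have h4 : K * (ε / (K + 1)) ≤ ε := by
      rw [mul_div_assoc'] at *
      rw [div_le_iff₀ (by positivity)]
      nlinarith
    linarith
  calc ‖F σ - F τ - (σ - τ) • c‖ ≤ K * (σ - τ) ^ 2 := h σ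
    _ = K * |σ - τ| * |σ - τ| := by rw [← abs_sq, sq, abs_mul]; ring
    _ ≤ ε * ‖σ - τ‖ := by
        rw [Real.norm_eq_abs]
        exact mul_le_mul_of_nonneg_right h2 (abs_nonneg _)

end RealEstimates


/-- integral symbol -/
noncomputable def gsym (τ x : ℝ) : ℝ := ∫ s in (0:ℝ)..τ, Real.cos (s * Real.sqrt x)

lemma gsym_eq {x : ℝ} (τ : ℝ) (hx : 0 ≤ x) :
    gsym τ x = if x = 0 then τ else Real.sin (τ * Real.sqrt x) / Real.sqrt x := by
  by_cases h0 : x = 0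
  · subst h0
    simp [gsym]
  · have hy : 0 < Real.sqrt x := Real.sqrt_pos.mpr (lt_of_le_of_ne hx (Ne.symm h0))
    rw [if_neg h0]
    unfold gsym
    rw [show (∫ s in (0:ℝ)..τ, Real.cos (s * Real.sqrt x)) = (Real.sqrt x)⁻¹ • ∫ s in (0 * Real.sqrt x)..τ * Real.sqrt x, Real.cos s from intervalIntegral.integral_comp_mul_right Real.cos hy.ne']
    simp [integral_cos, smul_eq_mul, div_eq_inv_mul]

lemma gsym_lipschitz (τ : ℝ) {x x' : ℝ} :
    |gsym τ x - gsym τ x'| ≤ (τ ^ 2) * |Real.sqrt x - Real.sqrt x'| := by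
  have hInt : ∀ y : ℝ, IntervalIntegrable (fun s => Real.cos (s * y)) volume 0 τ :=
    fun y => (Real.continuous_cos.comp (continuous_id.mul continuous_const)).intervalIntegrable _ _
  have : gsym τ x - gsym τ x' =
      ∫ s in (0:ℝ)..τ, (Real.cos (s * Real.sqrt x) - Real.cos (s * Real.sqrt x')) := by
    rw [intervalIntegral.integral_sub (hInt _) (hInt _)]; rfl
  rw [this]
  have hb : ∀ s ∈ Set.uIoc (0:ℝ) τ,
      ‖Real.cos (s * Real.sqrt x) - Real.cos (s * Real.sqrt x')‖ ≤ |τ| * |Real.sqrt x - Real.sqrt x'| := by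
    intro s hs
    rw [Real.norm_eq_abs]
    calc |Real.cos (s * Real.sqrt x) - Real.cos (s * Real.sqrt x')|
        ≤ |s * Real.sqrt x - s * Real.sqrt x'| := abs_cos_sub_cos_le' _ _
      _ = |s| * |Real.sqrt x - Real.sqrt x'| := by rw [← mul_sub, abs_mul]
      _ ≤ |τ| * |Real.sqrt x - Real.sqrt x'| := by
          apply mul_le_mul_of_nonneg_right _ (abs_nonneg _)
          rcases Set.mem_uIoc.mp hs with h | h
          · rw [abs_of_pos h.1, abs_of_nonneg (le_of_lt (lt_of_lt_of_le h.1 h.2))]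
            exact h.2
          · rw [abs_of_nonpos h.2, abs_of_neg (lt_of_lt_of_le h.1 h.2)]
            linarith [h.1]
  have h := intervalIntegral.norm_integral_le_of_norm_le_const hb
  rw [Real.norm_eq_abs] at h
  calc |∫ s in (0:ℝ)..τ, (Real.cos (s * Real.sqrt x) - Real.cos (s * Real.sqrt x'))|
      ≤ |τ| * |Real.sqrt x - Real.sqrt x'| * |τ - 0| := h
    _ = τ ^ 2 * |Real.sqrt x - Real.sqrt x'| := by
        rw [sub_zero, ← sq_abs]; ring

lemma gsym_continuous (τ : ℝ) : Continuous (gsym τ) := by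
  rw [Metric.continuous_iff]
  intro x ε hε
  rcases Metric.continuous_iff.mp Real.continuous_sqrt x (ε / (τ ^ 2 + 1)) (by positivity)
    with ⟨δ, hδ, hδ'⟩
  refine ⟨δ, hδ, fun x' hx' => ?_⟩
  have h1 := hδ' x' hx'
  rw [Real.dist_eq] at h1 ⊢
  calc |gsym τ x' - gsym τ x| ≤ τ ^ 2 * |Real.sqrt x' - Real.sqrt x| := gsym_lipschitz τ
    _ ≤ τ ^ 2 * (ε / (τ ^ 2 + 1)) := mul_le_mul_of_nonneg_left h1.le (by positivity)
    _ < ε := by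
        rw [mul_div_assoc']
        rw [div_lt_iff₀ (by positivity)]
        nlinarith

lemma gsym_abs_le (τ x : ℝ) : |gsym τ x| ≤ |τ| := by
  have h := intervalIntegral.norm_integral_le_of_norm_le_const
    (C := 1) (f := fun s => Real.cos (s * Real.sqrt x)) (a := (0:ℝ)) (b := τ)
    (fun s _ => by rw [Real.norm_eq_abs]; exact Real.abs_cos_le_one _)
  simpa [Real.norm_eq_abs, gsym] using h

section Estimates

lemma gsym_est {B : ℝ} (σ τ : ℝ) {x : ℝ} (hx : 0 ≤ x) (hxB : x ≤ B) :
    |gsym σ x - gsym τ x - (σ - τ) * Real.cos (τ * Real.sqrt x)| ≤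
      Real.sqrt B * (σ - τ) ^ 2 := by
  rw [gsym_eq σ hx, gsym_eq τ hx]
  by_cases h0 : x = 0
  · subst h0
    have hz : ((if (0:ℝ) = 0 then σ else Real.sin (σ * Real.sqrt 0) / Real.sqrt 0) -
        if (0:ℝ) = 0 then τ else Real.sin (τ * Real.sqrt 0) / Real.sqrt 0) -
        (σ - τ) * Real.cos (τ * Real.sqrt 0) = 0 := by simp
    rw [hz, abs_zero]
    positivity
  · have hy : 0 < Real.sqrt x := Real.sqrt_pos.mpr (lt_of_le_of_ne hx (Ne.symm h0))
    set y := Real.sqrt x with hy_def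
    rw [if_neg h0, if_neg h0]
    have key := sin_taylor_bound (τ * y) (σ * y)
    have hexp : Real.sin (σ * y) / y - Real.sin (τ * y) / y - (σ - τ) * Real.cos (τ * y)
        = (Real.sin (σ * y) - Real.sin (τ * y) - (σ * y - τ * y) * Real.cos (τ * y)) / y := by
      field_simp
    rw [hexp, abs_div, abs_of_pos hy, div_le_iff₀ hy]
    have hyB : y ≤ Real.sqrt B := Real.sqrt_le_sqrt hxB
    calc |Real.sin (σ * y) - Real.sin (τ * y) - (σ * y - τ * y) * Real.cos (τ * y)|
        ≤ (σ * y - τ * y) ^ 2 := key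
      _ = (σ - τ) ^ 2 * y * y := by ring
      _ ≤ Real.sqrt B * (σ - τ) ^ 2 * y := by
          apply mul_le_mul_of_nonneg_right _ hy.le
          rw [mul_comm (Real.sqrt B)]
          exact mul_le_mul_of_nonneg_left hyB (by positivity)

lemma cos_est {B : ℝ} (σ τ : ℝ) {x : ℝ} (hx : 0 ≤ x) (hxB : x ≤ B) :
    |Real.cos (σ * Real.sqrt x) - Real.cos (τ * Real.sqrt x) -
      (σ - τ) * (-(Real.sqrt x * Real.sin (τ * Real.sqrt x)))| ≤ B * (σ - τ) ^ 2 := by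
  set y := Real.sqrt x with hy_def
  have key := cos_taylor_bound (τ * y) (σ * y)
  have hexp : Real.cos (σ * y) - Real.cos (τ * y) - (σ - τ) * (-(y * Real.sin (τ * y)))
      = Real.cos (σ * y) - Real.cos (τ * y) + (σ * y - τ * y) * Real.sin (τ * y) := by ring
  rw [hexp]
  have hy2 : y ^ 2 = x := Real.sq_sqrt hx
  calc |Real.cos (σ * y) - Real.cos (τ * y) + (σ * y - τ * y) * Real.sin (τ * y)|
      ≤ (σ * y - τ * y) ^ 2 := key
    _ = (σ - τ) ^ 2 * y ^ 2 := by ring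
    _ = x * (σ - τ) ^ 2 := by rw [hy2]; ring
    _ ≤ B * (σ - τ) ^ 2 := mul_le_mul_of_nonneg_right hxB (by positivity)

end Estimates

section Operator

variable {H : Type*} [NormedAddCommGroup H] [InnerProductSpace ℂ H] [CompleteSpace H]

/-- the cosine kernel -/
noncomputable def cosKernel (τ : ℝ) (A : H →L[ℂ] H) : H →L[ℂ] H :=
  cfc (fun x : ℝ => Real.cos (τ * Real.sqrt x)) A

variable {A : H →L[ℂ] H}

lemma cos_symbol_continuous (τ : ℝ) :
    Continuous fun x : ℝ => Real.cos (τ * Real.sqrt x) :=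
  Real.continuous_cos.comp (continuous_const.mul Real.continuous_sqrt)

lemma spectrum_nonneg_of_isPositive (hA : A.IsPositive) : ∀ x ∈ spectrum ℝ A, 0 ≤ x :=
  fun _ hx => spectrum_nonneg_of_nonneg ((ContinuousLinearMap.nonneg_iff_isPositive A).mpr hA) hx

lemma exists_spectrum_bound (A : H →L[ℂ] H) :
    ∃ B : ℝ, 0 ≤ B ∧ ∀ x ∈ spectrum ℝ A, x ≤ B := by
  obtain ⟨r, hr⟩ := (spectrum.isCompact (𝕜 := ℝ) A).isBounded.subset_closedBall 0
  refine ⟨max r 0, le_max_right _ _, fun x hx => ?_⟩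
  have hx' := hr hx
  rw [Metric.mem_closedBall, Real.dist_eq, sub_zero] at hx'
  exact (le_abs_self x).trans (hx'.trans (le_max_left r 0))

lemma waveKernel_eq_cfc_gsym (hA : A.IsPositive) (τ : ℝ) :
    waveKernel τ A = cfc (gsym τ) A := by
  unfold waveKernel
  exact cfc_congr fun x hx => gsym_eq τ (spectrum_nonneg_of_isPositive hA x hx) |>.symm

lemma norm_waveKernel_le (hA : A.IsPositive) (τ : ℝ) : ‖waveKernel τ A‖ ≤ |τ| := by
  rw [waveKernel_eq_cfc_gsym hA]
  exact norm_cfc_le (abs_nonneg τ) fun x _ => by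
    rw [Real.norm_eq_abs]; exact gsym_abs_le τ x

lemma hasDerivAt_waveKernel (hA : A.IsPositive) (τ : ℝ) :
    HasDerivAt (fun σ => waveKernel σ A) (cosKernel τ A) τ := by
  obtain ⟨B, hB0, hBs⟩ := exists_spectrum_bound A
  have hnn := spectrum_nonneg_of_isPositive hA
  apply hasDerivAt_of_le_sq (K := Real.sqrt B) (Real.sqrt_nonneg B)
  intro σ
  have hcongr : waveKernel σ A - waveKernel τ A - (σ - τ) • cosKernel τ A =
      cfc (fun x => gsym σ x - gsym τ x - (σ - τ) * Real.cos (τ * Real.sqrt x)) A := by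
    rw [waveKernel_eq_cfc_gsym hA, waveKernel_eq_cfc_gsym hA]
    unfold cosKernel
    rw [← cfc_smul (σ - τ) _ A, ← cfc_sub _ _ A ((gsym_continuous σ).continuousOn)
        ((gsym_continuous τ).continuousOn),
      ← cfc_sub (fun x => gsym σ x - gsym τ x) (fun x => (σ - τ) • Real.cos (τ * Real.sqrt x)) A (((gsym_continuous σ).sub (gsym_continuous τ)).continuousOn)
        (Continuous.continuousOn (f := fun x => (σ - τ) • Real.cos (τ * Real.sqrt x)) (by fun_prop))]
    simp [smul_eq_mul]
  rw [hcongr]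
  exact norm_cfc_le (by positivity) fun x hx => by
    rw [Real.norm_eq_abs]
    exact gsym_est σ τ (hnn x hx) (hBs x hx)

lemma mul_waveKernel_eq (hA : A.IsPositive) (τ : ℝ) :
    A * waveKernel τ A = cfc (fun x => Real.sqrt x * Real.sin (τ * Real.sqrt x)) A := by
  have hnn := spectrum_nonneg_of_isPositive hA
  have h1 : A * cfc (gsym τ) A = cfc (id : ℝ → ℝ) A * cfc (gsym τ) A := by
    rw [cfc_id ℝ A hA.isSelfAdjoint]
  rw [waveKernel_eq_cfc_gsym hA, h1,
    ← cfc_mul _ _ A continuousOn_id ((gsym_continuous τ).continuousOn)]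
  apply cfc_congr
  intro x hx
  have hx0 : 0 ≤ x := hnn x hx
  dsimp only
  rw [gsym_eq τ hx0]
  by_cases h0 : x = 0
  · subst h0; simp
  · have hy : 0 < Real.sqrt x := Real.sqrt_pos.mpr (lt_of_le_of_ne hx0 (Ne.symm h0))
    rw [if_neg h0]
    rw [show (id x : ℝ) = x from rfl]
    field_simp
    linear_combination (-Real.sin (τ * Real.sqrt x)) * Real.mul_self_sqrt hx0

lemma hasDerivAt_cosKernel (hA : A.IsPositive) (τ : ℝ) :
    HasDerivAt (fun σ => cosKernel σ A) (-(A * waveKernel τ A)) τ := by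
  obtain ⟨B, hB0, hBs⟩ := exists_spectrum_bound A
  have hnn := spectrum_nonneg_of_isPositive hA
  apply hasDerivAt_of_le_sq (K := B) hB0
  intro σ
  have hneg : -(A * waveKernel τ A) =
      cfc (fun x => -(Real.sqrt x * Real.sin (τ * Real.sqrt x))) A := by
    rw [mul_waveKernel_eq hA, ← cfc_neg]
  have hsin_cont : Continuous fun x : ℝ => Real.sqrt x * Real.sin (τ * Real.sqrt x) :=
    Real.continuous_sqrt.mul
      (Real.continuous_sin.comp (continuous_const.mul Real.continuous_sqrt))
  have hcongr : cosKernel σ A - cosKernel τ A - (σ - τ) • -(A * waveKernel τ A) =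
      cfc (fun x => Real.cos (σ * Real.sqrt x) - Real.cos (τ * Real.sqrt x) -
        (σ - τ) * (-(Real.sqrt x * Real.sin (τ * Real.sqrt x)))) A := by
    rw [hneg]
    unfold cosKernel
    rw [← cfc_smul (σ - τ) _ A, ← cfc_sub _ _ A ((cos_symbol_continuous σ).continuousOn)
        ((cos_symbol_continuous τ).continuousOn),
      ← cfc_sub (fun x => Real.cos (σ * Real.sqrt x) - Real.cos (τ * Real.sqrt x)) (fun x => (σ - τ) • -(Real.sqrt x * Real.sin (τ * Real.sqrt x))) A (((cos_symbol_continuous σ).sub (cos_symbol_continuous τ)).continuousOn)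
        (Continuous.continuousOn (f := fun x => (σ - τ) • -(Real.sqrt x * Real.sin (τ * Real.sqrt x))) (by fun_prop))]
    simp [smul_eq_mul]
  rw [hcongr]
  exact norm_cfc_le (by positivity) fun x hx => by
    rw [Real.norm_eq_abs]
    exact cos_est σ τ (hnn x hx) (hBs x hx)

lemma waveKernel_zero (hA : A.IsPositive) : waveKernel 0 A = 0 := by
  rw [waveKernel_eq_cfc_gsym hA]
  have : gsym 0 = (0 : ℝ → ℝ) := by
    funext x; simp [gsym]
  rw [this, cfc_zero]

lemma cosKernel_zero (hA : A.IsPositive) : cosKernel 0 A = 1 := by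
  unfold cosKernel
  have : (fun x : ℝ => Real.cos (0 * Real.sqrt x)) = (1 : ℝ → ℝ) := by
    funext x; simp
  rw [this, cfc_one ℝ A hA.isSelfAdjoint]

lemma continuous_waveKernel (hA : A.IsPositive) : Continuous fun τ => waveKernel τ A := by
  have : Differentiable ℝ fun τ => waveKernel τ A := fun τ => (hasDerivAt_waveKernel hA τ).differentiableAt
  exact this.continuous

end Operator

lemma continuous_cosKernel' {H : Type*} [NormedAddCommGroup H] [InnerProductSpace ℂ H]
    [CompleteSpace H] {A : H →L[ℂ] H} (hA : A.IsPositive) :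
    Continuous fun τ => cosKernel τ A := by
  have : Differentiable ℝ fun τ => cosKernel τ A :=
    fun τ => (hasDerivAt_cosKernel hA τ).differentiableAt
  exact this.continuous

section Conv

variable {H : Type*} [NormedAddCommGroup H] [InnerProductSpace ℂ H] [CompleteSpace H]
variable {A : H →L[ℂ] H}

lemma hasDerivAt_clm_apply_c {c : ℝ → H →L[ℂ] H} {c' : H →L[ℂ] H} {u : ℝ → H} {u' : H} {x : ℝ}
    (hc : HasDerivAt c c' x) (hu : HasDerivAt u u' x) :
    HasDerivAt (fun y => c y (u y)) (c' (u x) + c x u') x := by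
  let L := (ContinuousLinearMap.restrictScalarsIsometry ℂ H H ℝ ℝ).toContinuousLinearMap
  have hc2 : HasDerivAt (fun y => L (c y)) (L c') x :=
    L.hasFDerivAt.comp_hasDerivAt x hc
  exact hc2.clm_apply hu

lemma abs_le_abs_of_uIoc {T σ : ℝ} (hσ : σ ∈ Set.uIoc (0:ℝ) T) : |σ| ≤ |T| := by
  rcases Set.mem_uIoc.mp hσ with h | h
  · rw [abs_of_pos h.1, abs_of_nonneg (h.1.le.trans h.2)]; exact h.2
  · rw [abs_of_nonpos h.2, abs_of_neg (lt_of_lt_of_le h.1 h.2)]; linarith [h.1]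

lemma conv_continuous (hA : A.IsPositive) {g : ℝ → H} (hg : Continuous g) (t : ℝ) :
    Continuous fun σ => waveKernel σ A (g (t - σ)) :=
  (continuous_waveKernel hA).clm_apply (hg.comp (continuous_const.sub continuous_id))

lemma conv_hasDerivAt (hA : A.IsPositive) {g : ℝ → H} (hgd : Differentiable ℝ g)
    (hg'c : Continuous (deriv g)) {C : ℝ} (hC : ∀ z, ‖deriv g z‖ ≤ C) (T t : ℝ) :
    HasDerivAt (fun t' => ∫ σ in (0:ℝ)..T, waveKernel σ A (g (t' - σ)))
      (∫ σ in (0:ℝ)..T, waveKernel σ A (deriv g (t - σ))) t := by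
  have hwc := continuous_waveKernel hA
  refine (intervalIntegral.hasDerivAt_integral_of_dominated_loc_of_deriv_le (s := Metric.ball t 1) (Metric.ball_mem_nhds t one_pos)
    (F := fun x σ => waveKernel σ A (g (x - σ)))
    (F' := fun x σ => waveKernel σ A (deriv g (x - σ)))
    (bound := fun _ => |T| * C) ?_ ?_ ?_ ?_ ?_ ?_).2
  · filter_upwards with x
    exact (conv_continuous hA hgd.continuous x).aestronglyMeasurable
  · exact (conv_continuous hA hgd.continuous t).intervalIntegrable _ _
  · exact ((hwc.clm_apply (hg'c.comp (continuous_const.sub continuous_id)))).aestronglyMeasurable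
  · filter_upwards with σ
    intro hσ x _
    calc ‖waveKernel σ A (deriv g (x - σ))‖
        ≤ ‖waveKernel σ A‖ * ‖deriv g (x - σ)‖ := (waveKernel σ A).le_opNorm _
      _ ≤ |T| * C := by
          apply mul_le_mul ((norm_waveKernel_le hA σ).trans (abs_le_abs_of_uIoc hσ))
            (hC _) (norm_nonneg _) (abs_nonneg _)
  · exact intervalIntegrable_const
  · filter_upwards with σ
    intro _ x _
    have h1 : HasDerivAt (fun x => g (x - σ)) (deriv g (x - σ)) x :=
      HasDerivAt.comp_sub_const x σ (hgd (x - σ)).hasDerivAt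
    simpa using hasDerivAt_clm_apply_c (hasDerivAt_const x (waveKernel σ A)) h1

lemma conv_eq_of_le (hA : A.IsPositive) {g : ℝ → H} (hg : Continuous g) {ε : ℝ}
    (hgz : ∀ z, z < ε → g z = 0) (hε : 0 < ε) {t T1 T2 : ℝ} (h1 : t ≤ T1) (h12 : T1 ≤ T2) :
    (∫ σ in (0:ℝ)..T2, waveKernel σ A (g (t - σ))) =
      ∫ σ in (0:ℝ)..T1, waveKernel σ A (g (t - σ)) := by
  have hint : ∀ a b : ℝ, IntervalIntegrable (fun σ => waveKernel σ A (g (t - σ))) volume a b :=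
    fun a b => (conv_continuous hA hg t).intervalIntegrable a b
  rw [← intervalIntegral.integral_add_adjacent_intervals (hint 0 T1) (hint T1 T2)]
  have hz : (∫ σ in T1..T2, waveKernel σ A (g (t - σ))) = 0 := by
    rw [intervalIntegral.integral_congr (g := fun _ => (0:H))]
    · simp
    · intro σ hσ
      rw [Set.uIcc_of_le h12] at hσ
      have : g (t - σ) = 0 := hgz _ (by linarith [hσ.1])
      simp [this]
  rw [hz, add_zero]

lemma ftc_conv (hA : A.IsPositive) {g : ℝ → H} (hgd : Differentiable ℝ g)
    (hg'c : Continuous (deriv g)) (K K' : ℝ → H →L[ℂ] H)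
    (hK : ∀ σ, HasDerivAt K (K' σ) σ) (hK'c : Continuous K') (T t : ℝ) :
    (∫ σ in (0:ℝ)..T, (K' σ (g (t - σ)) - K σ (deriv g (t - σ)))) =
      K T (g (t - T)) - K 0 (g t) := by
  have hKc : Continuous K := by
    have : Differentiable ℝ K := fun σ => (hK σ).differentiableAt
    exact this.continuous
  have key : (∫ σ in (0:ℝ)..T, (K' σ (g (t - σ)) - K σ (deriv g (t - σ)))) =
      (fun σ => K σ (g (t - σ))) T - (fun σ => K σ (g (t - σ))) 0 := by
    apply intervalIntegral.integral_eq_sub_of_hasDerivAt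
    · intro σ _
      have h1 : HasDerivAt (fun σ => g (t - σ)) (-deriv g (t - σ)) σ :=
        HasDerivAt.comp_const_sub t σ (hgd (t - σ)).hasDerivAt
      have h2 := hasDerivAt_clm_apply_c (hK σ) h1
      simpa [sub_eq_add_neg] using h2
    · apply Continuous.intervalIntegrable
      exact (hK'c.clm_apply (hgd.continuous.comp (continuous_const.sub continuous_id))).sub
        (hKc.clm_apply (hg'c.comp (continuous_const.sub continuous_id)))
  simpa using key

end Conv

/-- **Wave equation representation formula** (formula (e13), bounded case).
`u(t) = ∫₀^t S(t−s, A) f(s) ds` is the unique twice continuously differentiable `H`-valued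
function on `[0,∞)` with `u'' + Au = f` on `[0,∞)` and `u(0) = u'(0) = 0`. -/
theorem wave_representation
    {H : Type*} [NormedAddCommGroup H] [InnerProductSpace ℂ H] [CompleteSpace H]
    (A : H →L[ℂ] H) (hA : A.IsPositive)
    (f : ℝ → H) (hf : ContDiff ℝ (⊤ : ℕ∞) f)
    (hfc : HasCompactSupport f) (hfs : tsupport f ⊆ Ioi (0 : ℝ)) :
    (ContDiffOn ℝ 2 (fun t : ℝ => ∫ s in (0 : ℝ)..t, waveKernel (t - s) A (f s)) (Ici 0) ∧
      (∀ t ∈ Ici (0 : ℝ),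
        derivWithin
            (derivWithin (fun t : ℝ => ∫ s in (0 : ℝ)..t, waveKernel (t - s) A (f s)) (Ici 0))
            (Ici 0) t +
          A (∫ s in (0 : ℝ)..t, waveKernel (t - s) A (f s)) = f t) ∧
      (∫ s in (0 : ℝ)..(0 : ℝ), waveKernel (0 - s) A (f s)) = 0 ∧
      derivWithin (fun t : ℝ => ∫ s in (0 : ℝ)..t, waveKernel (t - s) A (f s)) (Ici 0) 0 = 0) ∧
    ∀ v : ℝ → H,
      (ContDiffOn ℝ 2 v (Ici 0) ∧
        (∀ t ∈ Ici (0 : ℝ),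
          derivWithin (derivWithin v (Ici 0)) (Ici 0) t + A (v t) = f t) ∧
        v 0 = 0 ∧ derivWithin v (Ici 0) 0 = 0) →
      EqOn v (fun t : ℝ => ∫ s in (0 : ℝ)..t, waveKernel (t - s) A (f s)) (Ici 0) := by
  classical
  set u : ℝ → H := fun t : ℝ => ∫ s in (0 : ℝ)..t, waveKernel (t - s) A (f s) with hu_def
  set f1 : ℝ → H := deriv f with hf1_def
  set f2 : ℝ → H := deriv f1 with hf2_def
  -- smoothness facts about f
  have hfd : Differentiable ℝ f := hf.differentiable (by simp)
  have hf1s : ContDiff ℝ (⊤ : ℕ∞) f1 := (contDiff_infty_iff_deriv.mp hf).2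
  have hf1d : Differentiable ℝ f1 := hf1s.differentiable (by simp)
  have hf2s : ContDiff ℝ (⊤ : ℕ∞) f2 := (contDiff_infty_iff_deriv.mp hf1s).2
  have hf2d : Differentiable ℝ f2 := hf2s.differentiable (by simp)
  have hf3c : Continuous (deriv f2) := ((contDiff_infty_iff_deriv.mp hf2s).2).continuous
  -- vanishing below ε
  obtain ⟨ε, hε, hεs⟩ : ∃ ε : ℝ, 0 < ε ∧ ∀ z, z < ε → z ∉ tsupport f := by
    by_cases hne : (tsupport f).Nonempty
    · refine ⟨sInf (tsupport f), hfs (hfc.sInf_mem hne), fun z hz hmem => ?_⟩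
      exact absurd (csInf_le hfc.isBounded.bddBelow hmem) (not_le.mpr hz)
    · exact ⟨1, one_pos, fun z _ hmem => hne ⟨z, hmem⟩⟩
  have hfz : ∀ z, z < ε → f z = 0 := fun z hz =>
    image_eq_zero_of_notMem_tsupport (hεs z hz)
  have htsub1 : tsupport f1 ⊆ tsupport f :=
    closure_minimal support_deriv_subset (isClosed_tsupport f)
  have htsub2 : tsupport f2 ⊆ tsupport f :=
    (closure_minimal support_deriv_subset (isClosed_tsupport f1)).trans htsub1
  have hf1z : ∀ z, z < ε → f1 z = 0 := fun z hz =>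
    image_eq_zero_of_notMem_tsupport (fun hmem => hεs z hz (htsub1 hmem))
  have hf2z : ∀ z, z < ε → f2 z = 0 := fun z hz =>
    image_eq_zero_of_notMem_tsupport (fun hmem => hεs z hz (htsub2 hmem))
  -- bounds on derivatives
  have hfc1 : HasCompactSupport f1 := hfc.deriv
  have hfc2 : HasCompactSupport f2 := hfc1.deriv
  obtain ⟨C1, hC1⟩ := hf1d.continuous.bounded_above_of_compact_support hfc1
  obtain ⟨C2, hC2⟩ := hf2d.continuous.bounded_above_of_compact_support hfc2
  obtain ⟨C3, hC3⟩ := hf3c.bounded_above_of_compact_support hfc2.deriv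
  -- convolution integrals
  set V : (ℝ → H) → ℝ → ℝ → H :=
    fun g T t => ∫ σ in (0 : ℝ)..T, waveKernel σ A (g (t - σ)) with hV_def
  -- change of variables
  have hbase : ∀ t : ℝ, u t = V f t t := by
    intro t
    have h := intervalIntegral.integral_comp_sub_left
      (a := (0:ℝ)) (b := t) (fun σ => waveKernel σ A (f (t - σ))) t
    simp only [sub_sub_cancel, sub_zero, sub_self] at h
    show (∫ s in (0:ℝ)..t, waveKernel (t - s) A (f s))
        = ∫ σ in (0:ℝ)..t, waveKernel σ A (f (t - σ))
    exact h
  -- T-independence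
  have hVle : ∀ {g : ℝ → H}, Continuous g → (∀ z, z < ε → g z = 0) →
      ∀ {t T1 T2 : ℝ}, t ≤ T1 → T1 ≤ T2 → V g T2 t = V g T1 t := by
    intro g hg hgz t T1 T2 h1 h12
    exact conv_eq_of_le hA hg hgz hε h1 h12
  have huV : ∀ {t T : ℝ}, t ≤ T → u t = V f T t := by
    intro t T htT
    rw [hbase t, hVle hfd.continuous hfz (le_refl t) htT]
  -- derivatives of V in t
  have hV1 : ∀ T t : ℝ, HasDerivAt (fun t' => V f T t') (V f1 T t) t :=
    fun T t => conv_hasDerivAt hA hfd hf1d.continuous hC1 T t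
  have hV2 : ∀ T t : ℝ, HasDerivAt (fun t' => V f1 T t') (V f2 T t) t :=
    fun T t => conv_hasDerivAt hA hf1d hf2d.continuous hC2 T t
  have hV3 : ∀ T t : ℝ, HasDerivAt (fun t' => V f2 T t') (V (deriv f2) T t) t :=
    fun T t => conv_hasDerivAt hA hf2d hf3c hC3 T t
  -- derivatives of u
  have hu' : ∀ {T t : ℝ}, t < T → HasDerivAt u (V f1 T t) t := by
    intro T t htT
    refine (hV1 T t).congr_of_eventuallyEq ?_
    filter_upwards [Iio_mem_nhds htT] with t' ht'
    exact huV (le_of_lt ht')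
  have hud : Differentiable ℝ u := fun t => (hu' (lt_add_one t)).differentiableAt
  have hderiv_u : ∀ {T t : ℝ}, t < T → deriv u t = V f1 T t := fun h => (hu' h).deriv
  have hu'' : ∀ {T t : ℝ}, t < T → HasDerivAt (deriv u) (V f2 T t) t := by
    intro T t htT
    refine (hV2 T t).congr_of_eventuallyEq ?_
    filter_upwards [Iio_mem_nhds htT] with t' ht'
    exact hderiv_u ht'
  have hu'd : Differentiable ℝ (deriv u) := fun t => (hu'' (lt_add_one t)).differentiableAt
  have hderiv2_u : ∀ {T t : ℝ}, t < T → deriv (deriv u) t = V f2 T t :=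
    fun h => (hu'' h).deriv
  -- C² regularity
  have hu_cd2 : ContDiff ℝ 2 u := by
    rw [show (2 : WithTop ℕ∞) = 1 + 1 by norm_num, contDiff_succ_iff_deriv]
    refine ⟨hud, by simp, ?_⟩
    rw [contDiff_one_iff_deriv]
    refine ⟨hu'd, ?_⟩
    rw [continuous_iff_continuousAt]
    intro t
    have hc : ContinuousAt (fun t' => V f2 (t + 1) t') t :=
      (hV3 (t + 1) t).differentiableAt.continuousAt
    refine hc.congr ?_
    filter_upwards [Iio_mem_nhds (lt_add_one t)] with t' ht'
    exact (hderiv2_u ht').symm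
  -- the PDE in unrestricted form
  have hPDE : ∀ t : ℝ, deriv (deriv u) t + A (u t) = f t := by
    intro t
    set T := t + 1 with hT
    have htT : t < T := lt_add_one t
    rw [hderiv2_u htT]
    -- first integration by parts
    have hibp1 := ftc_conv hA hf1d hf2d.continuous
      (fun σ => waveKernel σ A) (fun σ => cosKernel σ A)
      (hasDerivAt_waveKernel hA) (continuous_cosKernel' hA) T t
    have hz1 : f1 (t - T) = 0 := hf1z _ (by rw [hT]; linarith)
    rw [hz1, map_zero, waveKernel_zero hA] at hibp1
    have hint_cos1 : IntervalIntegrable (fun σ => cosKernel σ A (f1 (t - σ))) volume 0 T :=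
      (((continuous_cosKernel' hA).clm_apply
        (hf1d.continuous.comp (continuous_const.sub continuous_id))).intervalIntegrable _ _)
    have hint_wk2 : IntervalIntegrable (fun σ => waveKernel σ A (f2 (t - σ))) volume 0 T :=
      (conv_continuous hA hf2d.continuous t).intervalIntegrable _ _
    rw [intervalIntegral.integral_sub hint_cos1 (by simpa [hf2_def] using hint_wk2)] at hibp1
    -- hibp1 : ∫ cos (f1) - ∫ wk (deriv f1) = 0 - 0
    have heq1 : V f2 T t = ∫ σ in (0:ℝ)..T, cosKernel σ A (f1 (t - σ)) := by
      have := sub_eq_zero.mp (by simpa using hibp1)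
      simpa [hV_def] using this.symm
    -- second integration by parts
    have hibp2 := ftc_conv hA hfd hf1d.continuous
      (fun σ => cosKernel σ A) (fun σ => -(A * waveKernel σ A))
      (hasDerivAt_cosKernel hA) (((continuous_const.mul (continuous_waveKernel hA))).neg) T t
    have hz2 : f (t - T) = 0 := hfz _ (by rw [hT]; linarith)
    rw [hz2, map_zero, cosKernel_zero hA] at hibp2
    have hint_Awk : IntervalIntegrable (fun σ => A (waveKernel σ A (f (t - σ)))) volume 0 T :=
      ((A.continuous.comp (conv_continuous hA hfd.continuous t)).intervalIntegrable _ _)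
    have hexp2 : (fun σ => (-(A * waveKernel σ A)) (f (t - σ)) - cosKernel σ A (f1 (t - σ)))
        = fun σ => -(A (waveKernel σ A (f (t - σ)))) - cosKernel σ A (f1 (t - σ)) := by
      funext σ
      simp [ContinuousLinearMap.mul_apply]
    rw [hexp2] at hibp2
    rw [intervalIntegral.integral_sub (by exact hint_Awk.neg) hint_cos1] at hibp2
    rw [intervalIntegral.integral_neg] at hibp2
    have hAP : (∫ σ in (0:ℝ)..T, A (waveKernel σ A (f (t - σ)))) = A (V f T t) := by
      rw [hV_def]
      exact A.intervalIntegral_comp_comm ((conv_continuous hA hfd.continuous t).intervalIntegrable _ _)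
    rw [hAP] at hibp2
    -- hibp2 : -(A (V f T t)) - ∫ cos f1 = 0 - 1 (f t)
    have huT : u t = V f T t := huV (le_of_lt htT)
    rw [heq1]
    have h1 : (1 : H →L[ℂ] H) (f t) = f t := rfl
    rw [h1] at hibp2
    have hfin : (∫ σ in (0:ℝ)..T, cosKernel σ A (f1 (t - σ))) = f t - A (u t) := by
      rw [huT]
      have h7 : (∫ σ in (0:ℝ)..T, cosKernel σ A (f1 (t - σ)))
          = -(-(A (V f T t)) - ∫ σ in (0:ℝ)..T, cosKernel σ A (f1 (t - σ))) - A (V f T t) := by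
        abel
      rw [h7, hibp2]
      abel
    rw [hfin]
    abel
  -- initial values
  have hu0 : u 0 = 0 := by
    rw [hu_def]
    exact intervalIntegral.integral_same
  have hderiv_u0 : deriv u 0 = 0 := by
    rw [hderiv_u one_pos]
    show (∫ σ in (0:ℝ)..1, waveKernel σ A (f1 (0 - σ))) = 0
    have hvz : ∀ σ ∈ uIcc (0:ℝ) 1, waveKernel σ A (f1 (0 - σ)) = 0 := by
      intro σ hσ
      rw [uIcc_of_le zero_le_one] at hσ
      have h0 : f1 (-σ) = 0 := hf1z _ (by linarith [hσ.1, hε])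
      simp [h0]
    rw [intervalIntegral.integral_congr (g := fun _ => (0:H)) hvz]
    simp
  -- derivWithin translations
  have huds : UniqueDiffOn ℝ (Ici (0:ℝ)) := uniqueDiffOn_Ici 0
  have hdw1 : EqOn (derivWithin u (Ici 0)) (deriv u) (Ici 0) := fun r hr =>
    (hud r).derivWithin (huds r hr)
  have hdw2 : ∀ t ∈ Ici (0:ℝ),
      derivWithin (derivWithin u (Ici 0)) (Ici 0) t = deriv (deriv u) t := by
    intro t ht
    rw [derivWithin_congr hdw1 (hdw1 ht)]
    exact (hu'd t).derivWithin (huds t ht)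
  have hPDEw : ∀ t ∈ Ici (0:ℝ),
      derivWithin (derivWithin u (Ici 0)) (Ici 0) t + A (u t) = f t := by
    intro t ht
    rw [hdw2 t ht]
    exact hPDE t
  refine ⟨⟨hu_cd2.contDiffOn, hPDEw, by simpa using hu0, ?_⟩, ?_⟩
  · rw [hdw1 (self_mem_Ici)]
    exact hderiv_u0
  -- uniqueness
  intro v ⟨hv1, hv2, hv3, hv4⟩
  intro t ht
  show v t = u t
  -- setup
  have hvdiff : DifferentiableOn ℝ v (Ici 0) :=
    hv1.differentiableOn (by norm_num)
  have hv'cd : ContDiffOn ℝ 1 (derivWithin v (Ici 0)) (Ici 0) :=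
    hv1.derivWithin huds (by norm_num)
  have hv'diff : DifferentiableOn ℝ (derivWithin v (Ici 0)) (Ici 0) :=
    hv'cd.differentiableOn (by norm_num)
  set w : ℝ → H := fun r => v r - u r with hw_def
  set q : ℝ → H := fun r => derivWithin v (Ici 0) r - deriv u r with hq_def
  have hw' : ∀ r ∈ Ici (0:ℝ), HasDerivWithinAt w (q r) (Ici 0) r := fun r hr =>
    ((hvdiff r hr).hasDerivWithinAt).sub ((hud r).hasDerivAt.hasDerivWithinAt)
  have hq' : ∀ r ∈ Ici (0:ℝ), HasDerivWithinAt q (-(A (w r))) (Ici 0) r := by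
    intro r hr
    have h1 : HasDerivWithinAt (derivWithin v (Ici 0))
        (derivWithin (derivWithin v (Ici 0)) (Ici 0) r) (Ici 0) r :=
      (hv'diff r hr).hasDerivWithinAt
    have h2 : HasDerivWithinAt (deriv u) (deriv (deriv u) r) (Ici 0) r :=
      (hu'd r).hasDerivAt.hasDerivWithinAt
    have h3 := h1.sub h2
    have hval : derivWithin (derivWithin v (Ici 0)) (Ici 0) r - deriv (deriv u) r
        = -(A (w r)) := by
      have hv2' := hv2 r hr
      have hu2' := hPDE r
      have e1 : derivWithin (derivWithin v (Ici 0)) (Ici 0) r = f r - A (v r) :=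
        eq_sub_of_add_eq hv2'
      have e2 : deriv (deriv u) r = f r - A (u r) :=
        eq_sub_of_add_eq hu2'
      rw [e1, e2, hw_def]
      simp only [map_sub]
      abel
    rw [← hval]
    exact h3
  -- initial conditions for w, q
  have hw0 : w 0 = 0 := by rw [hw_def]; simp [hv3, hu0]
  have hq0 : q 0 = 0 := by rw [hq_def]; simp [hv4, hderiv_u0]
  -- energy
  have hadj : ContinuousLinearMap.adjoint A = A :=
    (ContinuousLinearMap.isSelfAdjoint_iff'.mp hA.isSelfAdjoint)
  set c : ℝ → ℂ := fun r => (inner ℂ (q r) (q r) : ℂ) + (inner ℂ (A (w r)) (w r) : ℂ) with hc_def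
  have hc' : ∀ r ∈ Ici (0:ℝ), HasDerivWithinAt c 0 (Ici 0) r := by
    intro r hr
    have hAw : HasDerivWithinAt (fun r => A (w r)) (A (q r)) (Ici 0) r := by
      exact ((A.restrictScalars ℝ).hasFDerivAt.comp_hasDerivWithinAt r (hw' r hr))
    have hterm1 := (hq' r hr).inner ℂ (hq' r hr)
    have hterm2 := hAw.inner ℂ (hw' r hr)
    have hsum := hterm1.add hterm2
    have hval : ((inner ℂ (q r) (-(A (w r))) : ℂ) + inner ℂ (-(A (w r))) (q r)) +
        ((inner ℂ (A (w r)) (q r) : ℂ) + inner ℂ (A (q r)) (w r)) = 0 := by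
      have hkey : (inner ℂ (A (q r)) (w r) : ℂ) = inner ℂ (q r) (A (w r)) := by
        conv_lhs => rw [← hadj]
        exact ContinuousLinearMap.adjoint_inner_left A (w r) (q r)
      rw [hkey, inner_neg_left, inner_neg_right]
      ring
    rw [hval] at hsum
    exact hsum
  set E : ℝ → ℝ := fun r => RCLike.re (c r) with hE_def
  have hE' : ∀ r ∈ Ici (0:ℝ), HasDerivWithinAt E 0 (Ici 0) r := by
    intro r hr
    have := ((RCLike.reCLM (K := ℂ)).hasFDerivAt.comp_hasDerivWithinAt r (hc' r hr))
    exact (by simpa using this : HasDerivWithinAt (⇑RCLike.re ∘ c) 0 (Ici 0) r)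
  have hE0 : E 0 = 0 := by
    rw [hE_def, hc_def]
    simp [hw0, hq0]
  have hEzero : ∀ r ∈ Ici (0:ℝ), E r = 0 := by
    intro r hr
    have hcont : ContinuousOn E (Icc 0 r) := fun x hx =>
      ((hE' x hx.1).continuousWithinAt).mono Icc_subset_Ici_self
    have hderiv : ∀ x ∈ Ico (0:ℝ) r, HasDerivWithinAt E 0 (Ici x) x := fun x hx =>
      (hE' x hx.1).mono (Ici_subset_Ici.mpr hx.1)
    have := constant_of_has_deriv_right_zero hcont hderiv r (right_mem_Icc.mpr hr)
    rw [this, hE0]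
  -- conclude q = 0 on Ici 0
  have hqzero : ∀ r ∈ Ici (0:ℝ), q r = 0 := by
    intro r hr
    have h0 := hEzero r hr
    have h1 : E r = ‖q r‖ ^ 2 + RCLike.re (inner ℂ (A (w r)) (w r) : ℂ) := by
      rw [hE_def, hc_def]
      simp only [map_add]
      congr 1
      exact inner_self_eq_norm_sq (q r)
    have h2 : 0 ≤ RCLike.re (inner ℂ (A (w r)) (w r) : ℂ) := by
      have := hA.2 (w r)
      rwa [ContinuousLinearMap.reApplyInnerSelf_apply] at this
    have h3 : (0:ℝ) ≤ ‖q r‖ ^ 2 := by positivity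
    have h4 : ‖q r‖ ^ 2 = 0 := by rw [h1] at h0; linarith
    have := (pow_eq_zero_iff two_ne_zero).mp h4
    simpa using this
  -- conclude w = 0 on Ici 0
  have hcontw : ContinuousOn w (Icc 0 t) := fun x hx =>
    ((hw' x hx.1).continuousWithinAt).mono Icc_subset_Ici_self
  have hderivw : ∀ x ∈ Ico (0:ℝ) t, HasDerivWithinAt w 0 (Ici x) x := by
    intro x hx
    have := (hw' x hx.1).mono (Ici_subset_Ici.mpr hx.1)
    rwa [hqzero x hx.1] at this
  have := constant_of_has_deriv_right_zero hcontw hderivw t (right_mem_Icc.mpr ht)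
  rw [hw0] at this
  have : v t - u t = 0 := this
  have hvu : v t = u t := by rwa [sub_eq_zero] at this
  exact hvu
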